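/- Let U be a topological space admitting, for every open cover, a partition of unity subordinate to it (e.g. U a paracompact smooth manifold with smooth partitions of unity, modeled as: U a topological space with subordinate partitions of unity). Let f : E₁ → E₂ be a fiberwise-linear continuous surjection of vector bundles over B admitting local continuous sections over an open cover of U along a given map, and g : U → E₂ a continuous map over B admitting local lifts hᵢ : Uᵢ → E₁ on an open cover {Uᵢ} of U with a subordinate partition of unity {λᵢ}. Then the map u ↦ Σᵢ λᵢ(u) · hᵢ(u) (extended by the zero section outside supp λᵢ) is a global lift of g through f. -/
import Mathlib


open scoped Classical

theorem stmt_6 {ι U B : Type*} [TopologicalSpace U]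
    (E₁ E₂ : B → Type*) [∀ b, AddCommGroup (E₁ b)] [∀ b, Module ℝ (E₁ b)]
    [∀ b, AddCommGroup (E₂ b)] [∀ b, Module ℝ (E₂ b)]
    (f : ∀ b, E₁ b →ₗ[ℝ] E₂ b) (β : U → B) (g : ∀ u : U, E₂ (β u))
    (V : ι → Set U) (hVopen : ∀ i, IsOpen (V i)) (hVcov : ∀ u : U, ∃ i, u ∈ V i)
    (lam : PartitionOfUnity ι U Set.univ)
    (hsub : ∀ i, ∀ u : U, lam i u ≠ 0 → u ∈ V i)
    (h : ι → ∀ u : U, E₁ (β u))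
    (hlift : ∀ i, ∀ u ∈ V i, f (β u) (h i u) = g u) :
    ∀ u : U, f (β u) (∑ᶠ i, lam i u • (if u ∈ V i then h i u else 0)) = g u := by

  intro u
  have hfin : (Function.support fun i => lam i u • (if u ∈ V i then h i u else 0)).Finite := by
    apply (lam.locallyFinite.point_finite u).subset
    intro i hi
    simp only [Function.mem_support] at hi
    have : lam i u ≠ 0 := fun h0 => hi (by simp [h0])
    exact this
  erw [(f (β u)).toAddMonoidHom.map_finsum hfin]
  simp only [LinearMap.toAddMonoidHom_coe]
  have key : ∀ i, f (β u) (lam i u • (if u ∈ V i then h i u else 0)) = lam i u • g u := by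
    intro i
    by_cases h0 : lam i u = 0
    · simp [h0]
    · rw [if_pos (hsub i u h0), map_smul, hlift i u (hsub i u h0)]
  rw [finsum_congr key, ← finsum_smul, lam.sum_eq_one (Set.mem_univ u), one_smul]
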